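/- For strictly increasing sequences S = {s_1 < ⋯ < s_n} and T = {t_1 < ⋯ < t_n}, the determinant R_{S,T} = det(R_{s_i t_j}) (with the convention R_{ij} = 0 when i ≥ j) is nonzero if and only if s_i < t_i for all 1 ≤ i ≤ n. -/
import Mathlib


set_option synthInstance.maxHeartbeats 1000000
set_option maxHeartbeats 1000000

open MvPolynomial Finset

/-- Index type for the generators `R_{ij}`, `0 ≤ i < j`. -/
abbrev SigmaX : Type := {p : ℕ × ℕ // p.1 < p.2}

/-- The polynomial algebra `X = F₂[R_{ij} : 0 ≤ i < j]`. -/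
abbrev Xalg : Type := MvPolynomial SigmaX (ZMod 2)

/-- The generator `R_{ij}` of `X` (with the convention `R_{ij} = 0` when `i ≥ j`). -/
noncomputable def Rgen (i j : ℕ) : Xalg :=
  if h : i < j then X ⟨(i, j), h⟩ else 0

/-- The differential of `X`, determined on generators by
`d R_{ij} = ∑_{i<k<j} R_{ik} R_{kj}` and extended as an `F₂`-linear derivation. -/
noncomputable def dX : Derivation (ZMod 2) Xalg Xalg :=
  mkDerivation (ZMod 2)
    (fun p : SigmaX => ∑ k ∈ Finset.Ioo p.1.1 p.1.2, Rgen p.1.1 k * Rgen k p.1.2)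

/-- The `i`-th element of a finite set of naturals, in increasing order. -/
noncomputable def enum (S : Finset ℕ) (i : Fin S.card) : ℕ := (S.orderIsoOfFin rfl i : ℕ)

/-- The determinant `R_{S,T} = det (R_{s_i t_j})`, where the finite sets `S`, `T` are viewed as
strictly increasing sequences; by convention it is `0` if `S.card ≠ T.card`. -/
noncomputable def RST (S T : Finset ℕ) : Xalg :=
  if h : S.card = T.card then
    Matrix.det (Matrix.of fun i j : Fin S.card => Rgen (enum S i) (enum T (Fin.cast h j)))
  else 0

lemma enum_strictMono (S : Finset ℕ) : StrictMono (enum S) := fun i j h => by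
  simpa [enum] using (S.orderIsoOfFin rfl).strictMono h

lemma perm_exists_le {n : ℕ} (σ : Equiv.Perm (Fin n)) (i : Fin n) :
    ∃ k, k ≤ i ∧ i ≤ σ k := by
  by_contra h
  push_neg at h
  have hmaps : ∀ k ∈ Finset.Iic i, σ k ∈ Finset.Iio i := fun k hk =>
    Finset.mem_Iio.mpr (h k (Finset.mem_Iic.mp hk))
  have := Finset.card_le_card_of_injOn σ hmaps σ.injective.injOn
  rw [Fin.card_Iic, Fin.card_Iio] at this
  omega

lemma prod_X_eq {ι : Type*} (A : Finset ι) (p : ι → SigmaX) :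
    ∏ i ∈ A, (X (p i) : Xalg) = monomial (∑ i ∈ A, Finsupp.single (p i) 1) 1 := by
  induction A using Finset.cons_induction with
  | empty => simp [monomial_zero', C_1]
  | cons a A ha ih =>
      rw [Finset.prod_cons, Finset.sum_cons, ih, X, monomial_mul, one_mul]

lemma det_char2 {n : ℕ} (M : Matrix (Fin n) (Fin n) Xalg) :
    M.det = ∑ σ : Equiv.Perm (Fin n), ∏ i, M (σ i) i := by
  rw [Matrix.det_apply]
  refine Finset.sum_congr rfl fun σ _ => ?_
  rcases Int.units_eq_one_or (Equiv.Perm.sign σ) with h | h <;> rw [h]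
  · rw [one_smul]
  · rw [Units.smul_def]
    push_cast
    rw [neg_smul, one_smul]
    exact CharTwo.neg_eq _

/-- `R_{S,T} ≠ 0` if and only if `s_i < t_i` for all `i`. -/
theorem RST_ne_zero_iff (S T : Finset ℕ) (hc : S.card = T.card) :
    RST S T ≠ 0 ↔ ∀ i : Fin S.card, enum S i < enum T (Fin.cast hc i) := by
  set n := S.card with hn
  set s : Fin n → ℕ := enum S with hsdef
  set t : Fin n → ℕ := fun j => enum T (Fin.cast hc j) with htdef
  have hs : StrictMono s := enum_strictMono S
  have ht : StrictMono t := fun i j h => enum_strictMono T (by simpa using h)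
  have hRST : RST S T = ∑ σ : Equiv.Perm (Fin n), ∏ i, Rgen (s (σ i)) (t i) := by
    rw [RST, dif_pos hc, det_char2]
    rfl
  constructor
  · intro hne i
    by_contra hlt
    push_neg at hlt  -- t i ≤ s i
    apply hne
    rw [hRST]
    refine Finset.sum_eq_zero fun σ _ => ?_
    obtain ⟨k, hk1, hk2⟩ := perm_exists_le σ i
    refine Finset.prod_eq_zero (Finset.mem_univ k) ?_
    rw [Rgen, dif_neg]
    exact not_lt.mpr ((ht.monotone hk1).trans (hlt.trans (hs.monotone hk2)))
  · intro hlt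
    set p : Fin n → SigmaX := fun i => ⟨(s i, t i), hlt i⟩ with hp
    have hpinj : Function.Injective p := fun i j h => by
      have : t i = t j := congrArg (fun x : SigmaX => x.1.2) h
      exact ht.injective this
    set m0 : SigmaX →₀ ℕ := ∑ i, Finsupp.single (p i) 1 with hm0
    intro h0
    have hcoeff : coeff m0 (RST S T) = 1 := by
      rw [hRST, MvPolynomial.coeff_sum]
      have key : ∀ σ : Equiv.Perm (Fin n),
          coeff m0 (∏ i, Rgen (s (σ i)) (t i)) = if σ = 1 then 1 else 0 := by
        intro σ
        by_cases hall : ∀ i, s (σ i) < t i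
        · have : (∏ i, Rgen (s (σ i)) (t i))
              = monomial (∑ i, Finsupp.single (⟨(s (σ i), t i), hall i⟩ : SigmaX) 1) 1 := by
            rw [← prod_X_eq]
            exact Finset.prod_congr rfl fun i _ => by rw [Rgen, dif_pos (hall i)]
          rw [this, coeff_monomial]
          congr 1
          simp only [eq_iff_iff]
          constructor
          · intro he
            by_contra hσ
            obtain ⟨i, hi⟩ : ∃ i, σ i ≠ i := by
              by_contra hh; push_neg at hh
              exact hσ (Equiv.ext hh)
            have h1 : m0 (p i) = 1 := by
              rw [hm0, Finsupp.finset_sum_apply]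
              rw [Finset.sum_eq_single i]
              · simp
              · intro j _ hj
                rw [Finsupp.single_apply, if_neg (fun h => hj (hpinj h))]
              · simp
            have h2 : (∑ j, Finsupp.single (⟨(s (σ j), t j), hall j⟩ : SigmaX) 1) (p i) = 0 := by
              rw [Finsupp.finset_sum_apply]
              refine Finset.sum_eq_zero fun j _ => ?_
              rw [Finsupp.single_apply, if_neg]
              intro h
              have hj : t j = t i := congrArg (fun x : SigmaX => x.1.2) h
              have hji : j = i := ht.injective hj
              subst hji
              have : s (σ j) = s j := congrArg (fun x : SigmaX => x.1.1) h
              exact hi (hs.injective this)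
            rw [he, h1] at h2
            exact one_ne_zero h2
          · rintro rfl
            simp [hm0, Equiv.Perm.one_apply, hp]
        · push_neg at hall
          obtain ⟨i, hi⟩ := hall
          rw [Finset.prod_eq_zero (Finset.mem_univ i) (by rw [Rgen, dif_neg (not_lt.mpr hi)]),
            coeff_zero, if_neg]
          rintro rfl
          exact (hlt i).not_ge (by simpa using hi)
      rw [Finset.sum_congr rfl fun σ _ => key σ]
      simp
    rw [h0, coeff_zero] at hcoeff
    exact zero_ne_one hcoeff
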